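/- For all x, y ∈ ℝ, the pseudo-distance satisfies d̃(f(x), f(y)) = f′(x) · d̃(x, y). -/

import Mathlib

/-- For a differentiable bijection `f : ℝ → ℝ` with α-Hölder
derivative satisfying `1 < λ₋ ≤ f′ ≤ λ₊`, the pseudo-distance
`d̃(x, y) = ∫_x^y ρ_x(z) dz`, where `ρ_x(y)` is the limit of the partial
products `∏_{n=1}^N f′(f⁻ⁿ(x))/f′(f⁻ⁿ(y))`, satisfies
`d̃(f(x), f(y)) = f′(x)·d̃(x, y)`. -/
theorem stmt7
    (f : ℝ → ℝ) (hbij : Function.Bijective f)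
    (hdiff : Differentiable ℝ f)
    (H α : ℝ) (hH : 0 ≤ H) (hα0 : 0 < α) (hα1 : α ≤ 1)
    (hHolder : ∀ x y : ℝ, |deriv f x - deriv f y| ≤ H * |x - y| ^ α)
    (lamm lamp : ℝ) (hlamm : 1 < lamm)
    (hderiv : ∀ x : ℝ, lamm ≤ deriv f x ∧ deriv f x ≤ lamp)
    (ρ : ℝ → ℝ → ℝ)
    (hρ : ∀ x y : ℝ,
      Filter.Tendsto
        (fun N : ℕ => ∏ n ∈ Finset.Icc 1 N,
          deriv f ((Function.invFun f)^[n] x) / deriv f ((Function.invFun f)^[n] y))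
        Filter.atTop (nhds (ρ x y))) :
    ∀ x y : ℝ,
      (∫ z in (f x)..(f y), ρ (f x) z) = deriv f x * ∫ z in x..y, ρ x z := by
  set g := Function.invFun f with hg
  have hgf : Function.LeftInverse g f := Function.leftInverse_invFun hbij.1
  have hpos : ∀ x : ℝ, (0 : ℝ) < deriv f x := fun x =>
    lt_of_lt_of_le (lt_trans zero_lt_one hlamm) (hderiv x).1
  have hmono : StrictMono f := by
    apply strictMono_of_deriv_pos hpos
  -- the multiplicative cocycle identity for ρ
  have hshift : ∀ a b : ℝ, ρ (f a) (f b) = deriv f a / deriv f b * ρ a b := by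
    intro a b
    set r : ℕ → ℝ := fun n => deriv f (g^[n] a) / deriv f (g^[n] b) with hr
    have hit : ∀ (c : ℝ) (n : ℕ), g^[n + 1] (f c) = g^[n] c := by
      intro c n
      rw [Function.iterate_succ_apply, hgf c]
    have key : ∀ N : ℕ,
        (∏ n ∈ Finset.Icc 1 (N + 1),
          deriv f (g^[n] (f a)) / deriv f (g^[n] (f b)))
          = r 0 * ∏ n ∈ Finset.Icc 1 N, r n := by
      intro N
      have h1 : (∏ n ∈ Finset.Icc 1 (N + 1),
          deriv f (g^[n] (f a)) / deriv f (g^[n] (f b)))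
          = ∏ i ∈ Finset.range (N + 1), r i := by
        rw [← Finset.Ico_add_one_right_eq_Icc, Finset.prod_Ico_eq_prod_range]
        simp only [Nat.add_sub_cancel]
        apply Finset.prod_congr rfl
        intro i _
        have : 1 + i = i + 1 := by omega
        rw [this, hit a i, hit b i]
      have h2 : (∏ n ∈ Finset.Icc 1 N, r n)
          = ∏ i ∈ Finset.range N, r (i + 1) := by
        rw [← Finset.Ico_add_one_right_eq_Icc, Finset.prod_Ico_eq_prod_range]
        simp only [Nat.add_sub_cancel]
        apply Finset.prod_congr rfl
        intro i _
        congr 1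
        omega
      rw [h1, h2, Finset.prod_range_succ', mul_comm]
    have hL1 : Filter.Tendsto
        (fun N : ℕ => ∏ n ∈ Finset.Icc 1 (N + 1),
          deriv f (g^[n] (f a)) / deriv f (g^[n] (f b)))
        Filter.atTop (nhds (ρ (f a) (f b))) :=
      (hρ (f a) (f b)).comp (Filter.tendsto_add_atTop_nat 1)
    have hL2 : Filter.Tendsto
        (fun N : ℕ => r 0 * ∏ n ∈ Finset.Icc 1 N, r n)
        Filter.atTop (nhds (r 0 * ρ a b)) :=
      (hρ a b).const_mul (r 0)
    have heq : (fun N : ℕ => ∏ n ∈ Finset.Icc 1 (N + 1),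
          deriv f (g^[n] (f a)) / deriv f (g^[n] (f b)))
        = fun N : ℕ => r 0 * ∏ n ∈ Finset.Icc 1 N, r n := funext key
    rw [heq] at hL1
    have := tendsto_nhds_unique hL1 hL2
    simpa [hr] using this
  -- pointwise integrand identity
  have hpt : ∀ x w : ℝ, |deriv f w| • ρ (f x) (f w) = deriv f x * ρ x w := by
    intro x w
    rw [hshift x w, abs_of_pos (hpos w), smul_eq_mul]
    field_simp
    rw [mul_assoc]
    exact mul_div_cancel_left₀ _ (hpos w).ne'
  intro x y
  -- change of variables on half-open intervals
  have himg : ∀ a b : ℝ, f '' Set.Ioc a b = Set.Ioc (f a) (f b) := by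
    intro a b
    have e := StrictMono.orderIsoOfSurjective f hmono hbij.2
    have hcoe : (StrictMono.orderIsoOfSurjective f hmono hbij.2 : ℝ → ℝ) = f :=
      StrictMono.coe_orderIsoOfSurjective f hmono hbij.2
    calc f '' Set.Ioc a b
        = (StrictMono.orderIsoOfSurjective f hmono hbij.2) '' Set.Ioc a b := by rw [hcoe]
      _ = Set.Ioc (f a) (f b) := by
          rw [OrderIso.image_Ioc]
          rw [hcoe]
  have hcov : ∀ a b : ℝ,
      (∫ z in Set.Ioc (f a) (f b), ρ (f x) z)
        = ∫ w in Set.Ioc a b, deriv f x * ρ x w := by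
    intro a b
    rw [← himg a b]
    rw [MeasureTheory.integral_image_eq_integral_abs_deriv_smul measurableSet_Ioc
      (fun w _ => ((hdiff w).hasDerivAt).hasDerivWithinAt) (hbij.1.injOn) (ρ (f x))]
    exact MeasureTheory.setIntegral_congr_fun measurableSet_Ioc fun w _ => hpt x w
  show intervalIntegral (ρ (f x)) (f x) (f y) _ = _
  rw [intervalIntegral, hcov x y, hcov y x,
    MeasureTheory.integral_const_mul, MeasureTheory.integral_const_mul]
  show _ = deriv f x * intervalIntegral (ρ x) x y _
  rw [intervalIntegral]
  ring
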